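/- Let p ≥ 2 and let G be a triangle-free [p+2, p]-graph of order n ≥ 2p+3 with minimum degree at least p. Then p is even, p ≥ 6, and G is isomorphic to the (p/2)-blow-up of C_5. -/

import Mathlib

open SimpleGraph

/-- A graph `G` is an `[s,t]`-graph if every induced subgraph of order `s` has at least
`t` edges. -/
def IsSTGraph {V : Type*} [Fintype V] [DecidableEq V] (G : SimpleGraph V) [DecidableRel G.Adj]
    (s t : ℕ) : Prop :=
  ∀ S : Finset V, S.card = s → t ≤ (G.induce (S : Set V)).edgeFinset.card


/-- The `k`-blow-up of a graph `H`: each vertex is replaced by `k` copies, a copy of `u` is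
adjacent to a copy of `v` iff `u` and `v` are adjacent in `H`. -/
def blowup {α : Type*} (H : SimpleGraph α) (k : ℕ) : SimpleGraph (α × Fin k) where
  Adj x y := H.Adj x.1 y.1
  symm := ⟨fun _ _ h => H.symm.symm _ _ h⟩
  loopless := ⟨fun x h => H.loopless.irrefl x.1 h⟩

instance {α : Type*} (H : SimpleGraph α) [DecidableRel H.Adj] (k : ℕ) :
    DecidableRel (blowup H k).Adj :=
  fun x y => inferInstanceAs (Decidable (H.Adj x.1 y.1))

section Helpers
open Finset

set_option linter.unusedSectionVars false

variable {V : Type*} [Fintype V] [DecidableEq V] (G : SimpleGraph V) [DecidableRel G.Adj]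

lemma st_pairs {p : ℕ} (hst : IsSTGraph G (p + 2) p) (S : Finset V) (hS : S.card = p + 2) :
    2 * p ≤ ((S ×ˢ S).filter fun z => G.Adj z.1 z.2).card := by
  have h := hst S hS
  have h2 := (G.induce (S : Set V)).two_mul_card_edgeFinset
  have hcard : (Finset.univ.filter fun (x : ↥(S : Set V) × ↥(S : Set V)) => G.Adj x.1.1 x.2.1).card
      = ((S ×ˢ S).filter fun z => G.Adj z.1 z.2).card := by
    apply Finset.card_bij (fun a _ => (a.1.1, a.2.1))
    · rintro ⟨⟨a, ha⟩, ⟨b, hb⟩⟩ hmem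
      simp only [Finset.mem_filter, Finset.mem_product]
      simp only [Finset.mem_filter] at hmem
      exact ⟨⟨by exact_mod_cast ha, by exact_mod_cast hb⟩, hmem.2⟩
    · rintro ⟨⟨a, ha⟩, ⟨b, hb⟩⟩ h1 ⟨⟨c, hc⟩, ⟨e, he⟩⟩ h2 hh
      simp only [Prod.mk.injEq] at hh
      simp [Prod.ext_iff, Subtype.ext_iff, hh.1, hh.2]
    · rintro ⟨a, b⟩ hmem
      simp only [Finset.mem_filter, Finset.mem_product] at hmem
      exact ⟨⟨⟨a, by exact_mod_cast hmem.1.1⟩, ⟨b, by exact_mod_cast hmem.1.2⟩⟩,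
        by simpa using hmem.2, rfl⟩
  calc 2 * p ≤ 2 * (G.induce (S : Set V)).edgeFinset.card := by omega
    _ = _ := by rw [h2]; exact hcard

lemma pairs_le_two (I : Finset V) (hI : ∀ a ∈ I, ∀ b ∈ I, ¬G.Adj a b) {x y : V}
    (hy : y ∉ I) (hxy : x ≠ y) (hnadj : ¬G.Adj x y) :
    (((insert x (insert y I)) ×ˢ (insert x (insert y I))).filter fun z => G.Adj z.1 z.2).card ≤
      2 * ((I ∩ G.neighborFinset x).card + (I ∩ G.neighborFinset y).card) := by
  classical
  set S := insert x (insert y I) with hS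
  have hsub : ((S ×ˢ S).filter fun z => G.Adj z.1 z.2) ⊆
      (({x} ×ˢ (I ∩ G.neighborFinset x)) ∪ ((I ∩ G.neighborFinset x) ×ˢ {x})) ∪
      (({y} ×ˢ (I ∩ G.neighborFinset y)) ∪ ((I ∩ G.neighborFinset y) ×ˢ {y})) := by
    rintro ⟨a, b⟩ hmem
    simp only [Finset.mem_filter, Finset.mem_product, hS, Finset.mem_insert] at hmem
    obtain ⟨⟨ha, hb⟩, hadj⟩ := hmem
    have hne : a ≠ b := G.ne_of_adj hadj
    simp only [Finset.mem_union, Finset.mem_product, Finset.mem_singleton, Finset.mem_inter,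
      mem_neighborFinset]
    rcases ha with rfl | rfl | haI
    · rcases hb with rfl | rfl | hbI
      · exact absurd rfl hne
      · exact absurd hadj hnadj
      · exact Or.inl (Or.inl ⟨rfl, hbI, hadj⟩)
    · rcases hb with rfl | rfl | hbI
      · exact absurd (G.adj_symm hadj) hnadj
      · exact absurd rfl hne
      · exact Or.inr (Or.inl ⟨rfl, hbI, hadj⟩)
    · rcases hb with rfl | rfl | hbI
      · exact Or.inl (Or.inr ⟨⟨haI, G.adj_symm hadj⟩, rfl⟩)
      · exact Or.inr (Or.inr ⟨⟨haI, G.adj_symm hadj⟩, rfl⟩)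
      · exact absurd hadj (hI a haI b hbI)
  calc _ ≤ _ := Finset.card_le_card hsub
    _ ≤ (({x} ×ˢ (I ∩ G.neighborFinset x)).card + ((I ∩ G.neighborFinset x) ×ˢ {x}).card) +
        (({y} ×ˢ (I ∩ G.neighborFinset y)).card + ((I ∩ G.neighborFinset y) ×ˢ {y}).card) := by
      refine (Finset.card_union_le _ _).trans ?_
      gcongr <;> exact Finset.card_union_le _ _
    _ ≤ _ := by simp [Finset.card_product]; omega

/-- Key Lemma: pair bound. -/
lemma KL {p : ℕ} (hst : IsSTGraph G (p + 2) p) (I : Finset V)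
    (hI : ∀ a ∈ I, ∀ b ∈ I, ¬G.Adj a b) (hIc : I.card = p) {x y : V}
    (hx : x ∉ I) (hy : y ∉ I) (hxy : x ≠ y) (hnadj : ¬G.Adj x y) :
    p ≤ (I ∩ G.neighborFinset x).card + (I ∩ G.neighborFinset y).card := by
  have hcard : (insert x (insert y I)).card = p + 2 := by
    rw [Finset.card_insert_of_notMem (by simp [hx, hxy]),
      Finset.card_insert_of_notMem hy, hIc]
  have h1 := st_pairs G hst _ hcard
  have h2 := pairs_le_two G I hI hy hxy hnadj
  omega

/-- If `I` is an independent set of size `p+1`, any vertex outside has `≥ p` neighbours in it. -/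
lemma big_indep {p : ℕ} (hst : IsSTGraph G (p + 2) p) (I : Finset V)
    (hI : ∀ a ∈ I, ∀ b ∈ I, ¬G.Adj a b) (hIc : I.card = p + 1) {x : V} (hx : x ∉ I) :
    p ≤ (I ∩ G.neighborFinset x).card := by
  classical
  have hcard : (insert x I).card = p + 2 := by
    rw [Finset.card_insert_of_notMem hx, hIc]
  have h1 := st_pairs G hst _ hcard
  have hsub : (((insert x I) ×ˢ (insert x I)).filter fun z => G.Adj z.1 z.2) ⊆
      (({x} ×ˢ (I ∩ G.neighborFinset x)) ∪ ((I ∩ G.neighborFinset x) ×ˢ {x})) := by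
    rintro ⟨a, b⟩ hmem
    simp only [Finset.mem_filter, Finset.mem_product, Finset.mem_insert] at hmem
    obtain ⟨⟨ha, hb⟩, hadj⟩ := hmem
    have hne : a ≠ b := G.ne_of_adj hadj
    simp only [Finset.mem_union, Finset.mem_product, Finset.mem_singleton, Finset.mem_inter,
      mem_neighborFinset]
    rcases ha with rfl | haI
    · rcases hb with rfl | hbI
      · exact absurd rfl hne
      · exact Or.inl ⟨rfl, hbI, hadj⟩
    · rcases hb with rfl | hbI
      · exact Or.inr ⟨⟨haI, G.adj_symm hadj⟩, rfl⟩
      · exact absurd hadj (hI a haI b hbI)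
  have := Finset.card_le_card hsub
  have h3 := Finset.card_union_le ({x} ×ˢ (I ∩ G.neighborFinset x))
    ((I ∩ G.neighborFinset x) ×ˢ {x})
  simp [Finset.card_product] at h3 this
  omega

/-- Any `p+2` vertices contain an edge. -/
lemma exists_edge {p : ℕ} (hst : IsSTGraph G (p + 2) p) (hp : 2 ≤ p) (S : Finset V)
    (hS : S.card = p + 2) : ∃ a ∈ S, ∃ b ∈ S, G.Adj a b := by
  have h1 := st_pairs G hst S hS
  have : ((S ×ˢ S).filter fun z => G.Adj z.1 z.2).Nonempty := by
    rw [← Finset.card_pos]; omega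
  obtain ⟨⟨a, b⟩, hmem⟩ := this
  simp only [Finset.mem_filter, Finset.mem_product] at hmem
  exact ⟨a, hmem.1.1, b, hmem.1.2, hmem.2⟩

lemma tri_free (htf : G.CliqueFree 3) {a b c : V} (h1 : G.Adj a b) (h2 : G.Adj a c)
    (h3 : G.Adj b c) : False :=
  htf {a, b, c} (is3Clique_triple_iff.mpr ⟨h1, h2, h3⟩)

lemma nbhd_indep (htf : G.CliqueFree 3) (v : V) :
    ∀ a ∈ G.neighborFinset v, ∀ b ∈ G.neighborFinset v, ¬G.Adj a b := by
  intro a ha b hb hadj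
  rw [mem_neighborFinset] at ha hb
  exact tri_free G htf ha hb hadj

/-- There is no independent set of size `p+1`. -/
lemma no_big_indep {p n : ℕ} (hp : 2 ≤ p) (horder : Fintype.card V = n) (hn : 2 * p + 3 ≤ n)
    (hst : IsSTGraph G (p + 2) p) (htf : G.CliqueFree 3) (I : Finset V)
    (hI : ∀ a ∈ I, ∀ b ∈ I, ¬G.Adj a b) (hIc : I.card = p + 1) : False := by
  classical
  -- find an edge outside I
  have hcompl : p + 2 ≤ (Finset.univ \ I).card := by
    rw [Finset.card_sdiff_of_subset (Finset.subset_univ I), Finset.card_univ, horder, hIc]; omega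
  obtain ⟨T, hTsub, hTcard⟩ := Finset.exists_subset_card_eq hcompl
  obtain ⟨a, haT, b, hbT, hadj⟩ := exists_edge G hst hp T hTcard
  have haI : a ∉ I := fun h => (Finset.mem_sdiff.mp (hTsub haT)).2 h
  have hbI : b ∉ I := fun h => (Finset.mem_sdiff.mp (hTsub hbT)).2 h
  have ha := big_indep G hst I hI hIc haI
  have hb := big_indep G hst I hI hIc hbI
  -- common neighbour in I
  have hcap : 0 < ((I ∩ G.neighborFinset a) ∩ (I ∩ G.neighborFinset b)).card := by
    have hun : ((I ∩ G.neighborFinset a) ∪ (I ∩ G.neighborFinset b)).card ≤ p + 1 := by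
      refine le_trans (Finset.card_le_card ?_) hIc.le
      intro z hz
      rcases Finset.mem_union.mp hz with h | h
      exacts [(Finset.mem_inter.mp h).1, (Finset.mem_inter.mp h).1]
    have := Finset.card_union_add_card_inter (I ∩ G.neighborFinset a) (I ∩ G.neighborFinset b)
    omega
  obtain ⟨z, hz⟩ := Finset.card_pos.mp hcap
  simp only [Finset.mem_inter, mem_neighborFinset] at hz
  exact tri_free G htf hadj hz.1.2 hz.2.2

set_option linter.unusedSectionVars false

lemma regular {p n : ℕ} (hp : 2 ≤ p) (horder : Fintype.card V = n) (hn : 2 * p + 3 ≤ n)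
    (hst : IsSTGraph G (p + 2) p) (htf : G.CliqueFree 3) (hdeg : p ≤ G.minDegree) (v : V) :
    G.degree v = p := by
  classical
  have hge : p ≤ G.degree v := le_trans hdeg (G.minDegree_le_degree v)
  by_contra hne
  have : p + 1 ≤ (G.neighborFinset v).card := by
    rw [card_neighborFinset_eq_degree]; omega
  obtain ⟨I, hIsub, hIc⟩ := Finset.exists_subset_card_eq this
  exact no_big_indep G hp horder hn hst htf I
    (fun a ha b hb => nbhd_indep G htf v a (hIsub ha) b (hIsub hb)) hIc

lemma exists_C5 {p n : ℕ} (hp : 2 ≤ p) (horder : Fintype.card V = n) (hn : 2 * p + 3 ≤ n)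
    (hst : IsSTGraph G (p + 2) p) (htf : G.CliqueFree 3) (hdeg : p ≤ G.minDegree) :
    ∃ c : Fin 5 → V, (∀ i j, G.Adj (c i) (c j) ↔ j = i + 1 ∨ j = i - 1) ∧
      Function.Injective c := by
  classical
  have hne : Nonempty V := by
    rw [← Fintype.card_pos_iff, horder]; omega
  obtain ⟨v⟩ := hne
  set A := G.neighborFinset v with hA
  have hAcard : A.card = p := by
    rw [hA, card_neighborFinset_eq_degree]
    exact regular G hp horder hn hst htf hdeg v
  have hBcard : p + 2 ≤ (Finset.univ \ insert v A).card := by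
    rw [Finset.card_sdiff_of_subset (Finset.subset_univ _), Finset.card_univ, horder,
      Finset.card_insert_of_notMem (by simp [hA]), hAcard]
    omega
  obtain ⟨T, hTsub, hTcard⟩ := Finset.exists_subset_card_eq hBcard
  obtain ⟨x0, hx0T, y, hyT, hxy⟩ := exists_edge G hst hp T hTcard
  have hx0B := Finset.mem_sdiff.mp (hTsub hx0T)
  have hyB := Finset.mem_sdiff.mp (hTsub hyT)
  simp only [Finset.mem_insert, not_or] at hx0B hyB
  -- x0 has a neighbour in A
  have hnbr : ∀ z : V, z ∉ A → z ≠ v → (A ∩ G.neighborFinset z).Nonempty := by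
    intro z hzA hzv
    by_contra hemp
    rw [Finset.not_nonempty_iff_eq_empty] at hemp
    refine no_big_indep G hp horder hn hst htf (insert z A) ?_ ?_
    · intro a ha b hb
      simp only [Finset.mem_insert] at ha hb
      rcases ha with rfl | ha
      · rcases hb with rfl | hb
        · exact fun h => G.loopless.irrefl _ h
        · intro h
          have : b ∈ A ∩ G.neighborFinset a := by
            simp [Finset.mem_inter, hb, mem_neighborFinset, h]
          simp [hemp] at this
      · rcases hb with rfl | hb
        · intro h
          have : a ∈ A ∩ G.neighborFinset b := by
            simp [Finset.mem_inter, ha, mem_neighborFinset, G.adj_symm h]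
          simp [hemp] at this
        · exact nbhd_indep G htf v a ha b hb
    · rw [Finset.card_insert_of_notMem hzA, hAcard]
  obtain ⟨a1, ha1⟩ := hnbr x0 hx0B.2.2 hx0B.2.1
  obtain ⟨a2, ha2⟩ := hnbr y hyB.2.2 hyB.2.1
  simp only [Finset.mem_inter, hA, mem_neighborFinset] at ha1 ha2
  obtain ⟨hva1, ha1x⟩ := ha1
  obtain ⟨hva2, ha2y⟩ := ha2
  have ha1x : G.Adj a1 x0 := G.adj_symm ha1x
  have ha2y : G.Adj a2 y := G.adj_symm ha2y
  have hyNx : y ∈ G.neighborFinset x0 := (mem_neighborFinset G x0 y).mpr hxy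
  have hxNy : x0 ∈ G.neighborFinset y := (mem_neighborFinset G y x0).mpr (G.adj_symm hxy)
  have ha1Nx : a1 ∈ G.neighborFinset x0 := (mem_neighborFinset G x0 a1).mpr (G.adj_symm ha1x)
  have ha2Ny : a2 ∈ G.neighborFinset y := (mem_neighborFinset G y a2).mpr (G.adj_symm ha2y)
  -- non-adjacencies
  have nvx : ¬G.Adj v x0 := fun h => hx0B.2.2 (by rw [hA, mem_neighborFinset]; exact h)
  have nvy : ¬G.Adj v y := fun h => hyB.2.2 (by rw [hA, mem_neighborFinset]; exact h)
  have na1y : ¬G.Adj a1 y := nbhd_indep G htf x0 a1 ha1Nx y hyNx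
  have ha1Nv : a1 ∈ G.neighborFinset v := (mem_neighborFinset G v a1).mpr hva1
  have ha2Nv : a2 ∈ G.neighborFinset v := (mem_neighborFinset G v a2).mpr hva2
  have na1a2 : ¬G.Adj a1 a2 := nbhd_indep G htf v a1 ha1Nv a2 ha2Nv
  have nxa2 : ¬G.Adj x0 a2 := nbhd_indep G htf y x0 hxNy a2 ha2Ny
  -- distinctness of non-adjacent pairs
  have dvx : v ≠ x0 := fun h => hx0B.2.1 h.symm
  have dvy : v ≠ y := fun h => hyB.2.1 h.symm
  have da1y : a1 ≠ y := fun h => nvy (h ▸ hva1)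
  have da1a2 : a1 ≠ a2 := fun h => na1y (h.symm ▸ ha2y)
  have dxa2 : x0 ≠ a2 := fun h => nvx (h.symm ▸ hva2)
  refine ⟨![v, a1, x0, y, a2], ?_, ?_⟩
  · intro i j
    fin_cases i <;> fin_cases j <;>
      simp_all [G.adj_comm v a1, G.adj_comm a1 x0, G.adj_comm x0 y, G.adj_comm y a2,
        G.adj_comm v a2, G.adj_comm v x0, G.adj_comm v y, G.adj_comm a1 y, G.adj_comm a1 a2,
        G.adj_comm x0 a2] <;> decide
  · intro i j hij
    fin_cases i <;> fin_cases j <;> simp_all <;>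
      first
      | rfl
      | (exact absurd hij (by intro h; exact G.ne_of_adj (by assumption) h))
      | (exact absurd hij.symm (by intro h; exact G.ne_of_adj (by assumption) h))
      | (exact absurd hij (by assumption))
      | (exact absurd hij.symm (by assumption))

lemma nbr_inter_empty (htf : G.CliqueFree 3) {a b : V} (hadj : G.Adj a b) :
    G.neighborFinset a ∩ G.neighborFinset b = ∅ := by
  ext w
  simp only [Finset.mem_inter, mem_neighborFinset, Finset.notMem_empty, iff_false, not_and]
  exact fun h1 h2 => tri_free G htf hadj h1 h2

/-- auxiliary refutation used in the "one neighbour on the cycle" case -/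
lemma aux_one {p n : ℕ} (hp : 2 ≤ p) (horder : Fintype.card V = n) (hn : 2 * p + 3 ≤ n)
    (hst : IsSTGraph G (p + 2) p) (htf : G.CliqueFree 3) (hdeg : p ≤ G.minDegree)
    {x u e e' r : V} (hxu : G.Adj x u) (hxe : ¬G.Adj x e) (hue : ¬G.Adj u e)
    (hee' : G.Adj e e') (hxe' : ¬G.Adj x e') (hue' : ¬G.Adj u e')
    (hxr : ¬G.Adj x r) (hur : ¬G.Adj u r) (hre : ¬G.Adj r e) (hrne : r ≠ e) : False := by
  classical
  have reg := regular G hp horder hn hst htf hdeg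
  have hdisj : G.neighborFinset x ∩ G.neighborFinset u = ∅ := nbr_inter_empty G htf hxu
  have hNx : (G.neighborFinset x).card = p := by rw [card_neighborFinset_eq_degree, reg]
  have hNu : (G.neighborFinset u).card = p := by rw [card_neighborFinset_eq_degree, reg]
  have hNe : (G.neighborFinset e).card = p := by rw [card_neighborFinset_eq_degree, reg]
  have hNr : (G.neighborFinset r).card = p := by rw [card_neighborFinset_eq_degree, reg]
  -- two KL applications
  have k1 : p ≤ (G.neighborFinset x ∩ G.neighborFinset r).card +
      (G.neighborFinset x ∩ G.neighborFinset e).card := by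
    refine KL G hst _ (nbhd_indep G htf x) hNx ?_ ?_ hrne hre
    · rw [mem_neighborFinset]; exact hxr
    · rw [mem_neighborFinset]; exact hxe
  have k2 : p ≤ (G.neighborFinset u ∩ G.neighborFinset r).card +
      (G.neighborFinset u ∩ G.neighborFinset e).card := by
    refine KL G hst _ (nbhd_indep G htf u) hNu ?_ ?_ hrne hre
    · rw [mem_neighborFinset]; exact hur
    · rw [mem_neighborFinset]; exact hue
  -- the degree of e bounds the two intersections
  have hb : (G.neighborFinset x ∩ G.neighborFinset e).card +
      (G.neighborFinset u ∩ G.neighborFinset e).card + 1 ≤ p := by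
    have hsub : (G.neighborFinset x ∩ G.neighborFinset e) ∪
        ((G.neighborFinset u ∩ G.neighborFinset e) ∪ {e'}) ⊆ G.neighborFinset e := by
      intro z hz
      simp only [Finset.mem_union, Finset.mem_inter, Finset.mem_singleton] at hz
      rcases hz with h | h | rfl
      · exact h.2
      · exact h.2
      · rw [mem_neighborFinset]; exact hee'
    have hd1 : Disjoint (G.neighborFinset x ∩ G.neighborFinset e)
        ((G.neighborFinset u ∩ G.neighborFinset e) ∪ {e'}) := by
      rw [Finset.disjoint_union_right]
      constructor
      · rw [Finset.disjoint_left]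
        intro z hz1 hz2
        have : z ∈ G.neighborFinset x ∩ G.neighborFinset u := by
          rw [Finset.mem_inter]
          exact ⟨(Finset.mem_inter.mp hz1).1, (Finset.mem_inter.mp hz2).1⟩
        rw [hdisj] at this; exact absurd this (Finset.notMem_empty z)
      · rw [Finset.disjoint_left]
        intro z hz1 hz2
        rw [Finset.mem_singleton] at hz2; subst hz2
        exact hxe' ((mem_neighborFinset G x z).mp (Finset.mem_inter.mp hz1).1)
    have hd2 : Disjoint (G.neighborFinset u ∩ G.neighborFinset e) ({e'} : Finset V) := by
      rw [Finset.disjoint_left]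
      intro z hz1 hz2
      rw [Finset.mem_singleton] at hz2; subst hz2
      exact hue' ((mem_neighborFinset G u z).mp (Finset.mem_inter.mp hz1).1)
    have := Finset.card_le_card hsub
    rw [Finset.card_union_of_disjoint hd1, Finset.card_union_of_disjoint hd2,
      Finset.card_singleton, hNe] at this
    omega
  -- r's degree bounds the other two
  have hr : (G.neighborFinset x ∩ G.neighborFinset r).card +
      (G.neighborFinset u ∩ G.neighborFinset r).card ≤ p := by
    have hsub : (G.neighborFinset x ∩ G.neighborFinset r) ∪
        (G.neighborFinset u ∩ G.neighborFinset r) ⊆ G.neighborFinset r := by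
      intro z hz
      rcases Finset.mem_union.mp hz with h | h
      exacts [(Finset.mem_inter.mp h).2, (Finset.mem_inter.mp h).2]
    have hd : Disjoint (G.neighborFinset x ∩ G.neighborFinset r)
        (G.neighborFinset u ∩ G.neighborFinset r) := by
      rw [Finset.disjoint_left]
      intro z hz1 hz2
      have : z ∈ G.neighborFinset x ∩ G.neighborFinset u :=
        Finset.mem_inter.mpr ⟨(Finset.mem_inter.mp hz1).1, (Finset.mem_inter.mp hz2).1⟩
      rw [hdisj] at this; exact absurd this (Finset.notMem_empty z)
    have := Finset.card_le_card hsub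
    rw [Finset.card_union_of_disjoint hd, hNr] at this
    exact this
  omega

lemma fin5_consec (s : Finset (Fin 5)) (h3 : 3 ≤ s.card) : ∃ i, i ∈ s ∧ i + 1 ∈ s := by
  revert s; decide

lemma fin5_pair (s : Finset (Fin 5)) (h2 : s.card = 2) (h : ∀ i, ¬(i ∈ s ∧ i + 1 ∈ s)) :
    ∃ i, s = {i + 1, i - 1} := by
  revert s; decide

lemma fin5_le_two (s : Finset (Fin 5)) (h : ∀ i, ¬(i ∈ s ∧ i + 1 ∈ s)) : s.card ≤ 2 := by
  revert s; decide

/-- no vertex has exactly one neighbour on an induced 5-cycle. -/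
lemma not_one_nbr {p n : ℕ} (hp : 2 ≤ p) (horder : Fintype.card V = n) (hn : 2 * p + 3 ≤ n)
    (hst : IsSTGraph G (p + 2) p) (htf : G.CliqueFree 3) (hdeg : p ≤ G.minDegree)
    (c : Fin 5 → V) (hc : ∀ i j, G.Adj (c i) (c j) ↔ j = i + 1 ∨ j = i - 1)
    {x : V} {i0 : Fin 5} (hx0 : G.Adj x (c i0)) (hother : ∀ j, j ≠ i0 → ¬G.Adj x (c j)) :
    False := by
  classical
  have reg := regular G hp horder hn hst htf hdeg
  set d : Fin 5 → V := fun j => c (i0 + j) with hd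
  have hdadj : ∀ i j, G.Adj (d i) (d j) ↔ j = i + 1 ∨ j = i - 1 := by
    intro i j
    rw [hd]
    simp only [hc (i0 + i) (i0 + j)]
    constructor
    · rintro (h | h)
      · left; rw [add_assoc] at h; exact add_left_cancel h
      · right; rw [add_sub_assoc] at h; exact add_left_cancel h
    · rintro (rfl | rfl)
      · left; rw [add_assoc]
      · right; rw [add_sub_assoc]
  have hxd0 : G.Adj x (d 0) := by rw [hd]; simpa using hx0
  have hxdj : ∀ j, j ≠ 0 → ¬G.Adj x (d j) := by
    intro j hj
    refine hother (i0 + j) ?_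
    intro h
    apply hj
    have := add_left_cancel (a := i0) (b := j) (c := 0) (by rw [add_zero]; exact h)
    exact this
  -- pick r outside N(x) ∪ N(d 0) and different from d 2, d 3
  have hdisj : G.neighborFinset x ∩ G.neighborFinset (d 0) = ∅ := nbr_inter_empty G htf hxd0
  have hNx : (G.neighborFinset x).card = p := by rw [card_neighborFinset_eq_degree, reg]
  have hN0 : (G.neighborFinset (d 0)).card = p := by rw [card_neighborFinset_eq_degree, reg]
  have hUcard : (G.neighborFinset x ∪ G.neighborFinset (d 0)).card = 2 * p := by
    have := Finset.card_union_add_card_inter (G.neighborFinset x) (G.neighborFinset (d 0))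
    rw [hdisj, Finset.card_empty, hNx, hN0] at this
    omega
  have hRcard : 1 ≤ ((Finset.univ \ (G.neighborFinset x ∪ G.neighborFinset (d 0))) \ {d 2, d 3}).card := by
    have h1 : (Finset.univ \ (G.neighborFinset x ∪ G.neighborFinset (d 0))).card = n - 2 * p := by
      rw [Finset.card_sdiff_of_subset (Finset.subset_univ _), Finset.card_univ, horder, hUcard]
    have h2 := Finset.le_card_sdiff ({d 2, d 3} : Finset V)
      (Finset.univ \ (G.neighborFinset x ∪ G.neighborFinset (d 0)))
    have h3 : ({d 2, d 3} : Finset V).card ≤ 2 := Finset.card_le_two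
    omega
  obtain ⟨r, hr⟩ := Finset.card_pos.mp (by omega : 0 < ((Finset.univ \ (G.neighborFinset x ∪ G.neighborFinset (d 0))) \ {d 2, d 3}).card)
  simp only [Finset.mem_sdiff, Finset.mem_univ, true_and, Finset.mem_union, not_or,
    Finset.mem_insert, Finset.mem_singleton, mem_neighborFinset] at hr
  obtain ⟨⟨hrx, hr0⟩, hrd2, hrd3⟩ := hr
  -- facts about the cycle translates
  have had23 : G.Adj (d 2) (d 3) := (hdadj 2 3).mpr (Or.inl rfl)
  have hn02 : ¬G.Adj (d 0) (d 2) := fun h => by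
    rcases (hdadj 0 2).mp h with h | h <;> revert h <;> decide
  have hn03 : ¬G.Adj (d 0) (d 3) := fun h => by
    rcases (hdadj 0 3).mp h with h | h <;> revert h <;> decide
  have hxd2 : ¬G.Adj x (d 2) := hxdj 2 (by decide)
  have hxd3 : ¬G.Adj x (d 3) := hxdj 3 (by decide)
  by_cases hr2 : G.Adj r (d 2)
  · have hr3 : ¬G.Adj r (d 3) := fun h => tri_free G htf hr2 h had23
    exact aux_one G hp horder hn hst htf hdeg hxd0 hxd3 hn03 (G.adj_symm had23) hxd2 hn02
      (fun h => hrx h) (fun h => hr0 h) hr3 hrd3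
  · exact aux_one G hp horder hn hst htf hdeg hxd0 hxd2 hn02 had23 hxd3 hn03
      (fun h => hrx h) (fun h => hr0 h) hr2 hrd2

/-- no vertex has zero neighbours on an induced 5-cycle. -/
lemma not_zero_nbr {p n : ℕ} (hp : 2 ≤ p) (horder : Fintype.card V = n) (hn : 2 * p + 3 ≤ n)
    (hst : IsSTGraph G (p + 2) p) (htf : G.CliqueFree 3) (hdeg : p ≤ G.minDegree)
    (c : Fin 5 → V) (hc : ∀ i j, G.Adj (c i) (c j) ↔ j = i + 1 ∨ j = i - 1)
    (hcinj : Function.Injective c) {x : V} (hnone : ∀ j, ¬G.Adj x (c j)) : False := by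
  classical
  have reg := regular G hp horder hn hst htf hdeg
  have hNx : (G.neighborFinset x).card = p := by rw [card_neighborFinset_eq_degree, reg]
  set t : Fin 5 → ℕ := fun i => (G.neighborFinset x ∩ G.neighborFinset (c i)).card with ht
  have hKL : ∀ i : Fin 5, p ≤ t i + t (i + 2) := by
    intro i
    refine KL G hst _ (nbhd_indep G htf x) hNx ?_ ?_ (hcinj.ne (by revert i; decide)) ?_
    · rw [mem_neighborFinset]; exact hnone i
    · rw [mem_neighborFinset]; exact hnone (i + 2)
    · rw [hc]
      revert i; decide
  have hlow : 5 * p ≤ ∑ i : Fin 5, (t i + t (i + 2)) := by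
    calc 5 * p = ∑ _i : Fin 5, p := by simp [mul_comm]
      _ ≤ _ := Finset.sum_le_sum fun i _ => hKL i
  have hshift : ∑ i : Fin 5, t (i + 2) = ∑ i : Fin 5, t i :=
    Fintype.sum_equiv (Equiv.addRight (2 : Fin 5)) _ _ (fun i => rfl)
  have hupper : ∑ i : Fin 5, t i ≤ 2 * p := by
    have heq : ∀ i : Fin 5, t i = ∑ w ∈ G.neighborFinset x,
        (if G.Adj (c i) w then 1 else 0) := by
      intro i
      simp only [ht]
      have : G.neighborFinset x ∩ G.neighborFinset (c i) =
          (G.neighborFinset x).filter (fun w => G.Adj (c i) w) := by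
        ext w
        simp [Finset.mem_inter, Finset.mem_filter, mem_neighborFinset]
      rw [this, Finset.card_filter]
    calc ∑ i : Fin 5, t i
        = ∑ w ∈ G.neighborFinset x, ∑ i : Fin 5, (if G.Adj (c i) w then 1 else 0) := by
          simp only [heq]; exact Finset.sum_comm
      _ ≤ ∑ _w ∈ G.neighborFinset x, 2 := by
          refine Finset.sum_le_sum fun w hw => ?_
          have : ∑ i : Fin 5, (if G.Adj (c i) w then 1 else 0) =
              (Finset.univ.filter fun i : Fin 5 => G.Adj (c i) w).card := by
            rw [Finset.card_filter]
          rw [this]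
          refine fin5_le_two _ fun i hi => ?_
          rw [Finset.mem_filter, Finset.mem_filter] at hi
          exact tri_free G htf ((hc i (i + 1)).mpr (Or.inl rfl)) hi.1.2 hi.2.2
      _ = 2 * p := by rw [Finset.sum_const, hNx]; ring
  rw [Finset.sum_add_distrib, hshift] at hlow
  omega

lemma exists_cls {p n : ℕ} (hp : 2 ≤ p) (horder : Fintype.card V = n) (hn : 2 * p + 3 ≤ n)
    (hst : IsSTGraph G (p + 2) p) (htf : G.CliqueFree 3) (hdeg : p ≤ G.minDegree)
    (c : Fin 5 → V) (hc : ∀ i j, G.Adj (c i) (c j) ↔ j = i + 1 ∨ j = i - 1)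
    (hcinj : Function.Injective c) (x : V) :
    ∃ i : Fin 5, G.Adj x (c (i + 1)) ∧ G.Adj x (c (i - 1)) ∧
      ∀ j, j ≠ i + 1 → j ≠ i - 1 → ¬G.Adj x (c j) := by
  classical
  set s : Finset (Fin 5) := Finset.univ.filter (fun j => G.Adj x (c j)) with hs
  have hmem : ∀ j, j ∈ s ↔ G.Adj x (c j) := by
    intro j; simp [hs]
  have hnc : ∀ i, ¬(i ∈ s ∧ i + 1 ∈ s) := by
    rintro i ⟨h1, h2⟩
    rw [hmem] at h1 h2
    exact tri_free G htf ((hc i (i + 1)).mpr (Or.inl rfl)) (G.adj_symm h1) (G.adj_symm h2)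
  have hle := fin5_le_two s hnc
  interval_cases h : s.card
  · exfalso
    refine not_zero_nbr G hp horder hn hst htf hdeg c hc hcinj (x := x) fun j hj => ?_
    have : j ∈ s := (hmem j).mpr hj
    rw [Finset.card_eq_zero.mp h] at this
    exact absurd this (Finset.notMem_empty j)
  · exfalso
    obtain ⟨i0, hi0⟩ := Finset.card_eq_one.mp h
    refine not_one_nbr G hp horder hn hst htf hdeg c hc (x := x) (i0 := i0) ?_ ?_
    · rw [← hmem, hi0]; exact Finset.mem_singleton_self i0
    · intro j hj hadj
      have : j ∈ s := (hmem j).mpr hadj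
      rw [hi0, Finset.mem_singleton] at this
      exact hj this
  · obtain ⟨i, hi⟩ := fin5_pair s h hnc
    refine ⟨i, ?_, ?_, ?_⟩
    · rw [← hmem, hi]; simp
    · rw [← hmem, hi]; simp
    · intro j hj1 hj2 hadj
      have : j ∈ s := (hmem j).mpr hadj
      rw [hi, Finset.mem_insert, Finset.mem_singleton] at this
      tauto

theorem triangle_free_st_graph_classification' {V : Type*} [Fintype V] [DecidableEq V]
    (G : SimpleGraph V) [DecidableRel G.Adj] (p n : ℕ) (hp : 2 ≤ p)
    (horder : Fintype.card V = n) (hn : 2 * p + 3 ≤ n)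
    (hst : IsSTGraph G (p + 2) p) (htf : G.CliqueFree 3)
    (hdeg : p ≤ G.minDegree) :
    Even p ∧ 6 ≤ p ∧ Nonempty (G ≃g blowup (cycleGraph 5) (p / 2)) := by
  classical
  obtain ⟨c, hc, hcinj⟩ := exists_C5 G hp horder hn hst htf hdeg
  have reg := regular G hp horder hn hst htf hdeg
  have hNcard : ∀ v : V, (G.neighborFinset v).card = p := fun v => by
    rw [card_neighborFinset_eq_degree, reg]
  choose cls h1 h2 h3 using exists_cls G hp horder hn hst htf hdeg c hc hcinj
  have huniq : ∀ (x : V) (i : Fin 5), G.Adj x (c (i + 1)) → G.Adj x (c (i - 1)) → cls x = i := by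
    intro x i ha hb
    have e1 : i + 1 = cls x + 1 ∨ i + 1 = cls x - 1 := by
      by_contra hcon; push_neg at hcon; exact h3 x (i + 1) hcon.1 hcon.2 ha
    have e2 : i - 1 = cls x + 1 ∨ i - 1 = cls x - 1 := by
      by_contra hcon; push_neg at hcon; exact h3 x (i - 1) hcon.1 hcon.2 hb
    have key : ∀ a i : Fin 5, (i + 1 = a + 1 ∨ i + 1 = a - 1) →
        (i - 1 = a + 1 ∨ i - 1 = a - 1) → a = i := by decide
    exact key (cls x) i e1 e2
  have hclsc : ∀ i, cls (c i) = i := fun i =>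
    huniq (c i) i ((hc i (i + 1)).mpr (Or.inl rfl)) ((hc i (i - 1)).mpr (Or.inr rfl))
  -- adjacency determines classes
  have hbeta : ∀ x y : V, G.Adj x y → cls y = cls x + 1 ∨ cls y = cls x - 1 := by
    intro x y hadj
    by_contra hcon
    push_neg at hcon
    have key : ∀ a b : Fin 5, b ≠ a + 1 → b ≠ a - 1 →
        ∃ k, (k = a + 1 ∨ k = a - 1) ∧ (k = b + 1 ∨ k = b - 1) := by decide
    obtain ⟨k, hk1, hk2⟩ := key (cls x) (cls y) hcon.1 hcon.2
    have hxk : G.Adj x (c k) := by rcases hk1 with rfl | rfl; exacts [h1 x, h2 x]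
    have hyk : G.Adj y (c k) := by rcases hk2 with rfl | rfl; exacts [h1 y, h2 y]
    exact tri_free G htf hadj hxk hyk
  -- completeness between consecutive classes
  have hgamma : ∀ x y : V, cls y = cls x + 1 → G.Adj x y := by
    intro x y hxy
    by_contra hnadj
    have hne : x ≠ y := by
      rintro rfl
      rw [left_eq_add] at hxy
      exact absurd hxy (by decide)
    have hinter : G.neighborFinset x ∩ G.neighborFinset y = ∅ := by
      ext z
      simp only [Finset.mem_inter, mem_neighborFinset, Finset.notMem_empty, iff_false, not_and]
      intro hxz hyz
      have e1 := hbeta x z hxz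
      have e2 := hbeta y z hyz
      rw [hxy] at e2
      revert e1 e2
      generalize cls x = a
      generalize cls z = b
      revert a b; decide
    have hzcard : 1 ≤ (Finset.univ \ insert x (insert y
        (G.neighborFinset x ∪ G.neighborFinset y))).card := by
      have hUle : (insert x (insert y (G.neighborFinset x ∪ G.neighborFinset y))).card
          ≤ 2 * p + 2 := by
        refine le_trans (Finset.card_insert_le _ _) ?_
        have := Finset.card_insert_le y (G.neighborFinset x ∪ G.neighborFinset y)
        have h2 := Finset.card_union_le (G.neighborFinset x) (G.neighborFinset y)
        rw [hNcard, hNcard] at h2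
        omega
      have := Finset.le_card_sdiff
        (insert x (insert y (G.neighborFinset x ∪ G.neighborFinset y))) Finset.univ
      rw [Finset.card_univ, horder] at this
      omega
    obtain ⟨z, hz⟩ := Finset.card_pos.mp (lt_of_lt_of_le Nat.zero_lt_one hzcard)
    simp only [Finset.mem_sdiff, Finset.mem_univ, true_and, Finset.mem_insert,
      Finset.mem_union, mem_neighborFinset, not_or] at hz
    obtain ⟨hzx, hzy, hznx, hzny⟩ := hz
    have hsubx : G.neighborFinset x ⊆ G.neighborFinset z := by
      have hKL : p ≤ (G.neighborFinset x ∩ G.neighborFinset z).card +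
          (G.neighborFinset x ∩ G.neighborFinset y).card := by
        refine KL G hst _ (nbhd_indep G htf x) (hNcard x) ?_ ?_ ?_ ?_
        · rw [mem_neighborFinset]; exact hznx
        · rw [mem_neighborFinset]; exact hnadj
        · exact fun h => hzy h
        · intro h; exact hzny (G.adj_symm h)
      rw [hinter, Finset.card_empty] at hKL
      have hsub : G.neighborFinset x ∩ G.neighborFinset z ⊆ G.neighborFinset x :=
        Finset.inter_subset_left
      have := Finset.card_le_card hsub
      have heq : G.neighborFinset x ∩ G.neighborFinset z = G.neighborFinset x :=
        Finset.eq_of_subset_of_card_le hsub (by rw [hNcard]; omega)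
      intro w hw
      rw [← heq] at hw
      exact (Finset.mem_inter.mp hw).2
    have hsuby : G.neighborFinset y ⊆ G.neighborFinset z := by
      have hKL : p ≤ (G.neighborFinset y ∩ G.neighborFinset z).card +
          (G.neighborFinset y ∩ G.neighborFinset x).card := by
        refine KL G hst _ (nbhd_indep G htf y) (hNcard y) ?_ ?_ ?_ ?_
        · rw [mem_neighborFinset]; exact hzny
        · rw [mem_neighborFinset]; intro h; exact hnadj (G.adj_symm h)
        · exact fun h => hzx h
        · intro h; exact hznx (G.adj_symm h)
      rw [Finset.inter_comm (G.neighborFinset y) (G.neighborFinset x), hinter, Finset.card_empty] at hKL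
      have hsub : G.neighborFinset y ∩ G.neighborFinset z ⊆ G.neighborFinset y :=
        Finset.inter_subset_left
      have heq : G.neighborFinset y ∩ G.neighborFinset z = G.neighborFinset y :=
        Finset.eq_of_subset_of_card_le hsub (by rw [hNcard]; omega)
      intro w hw
      rw [← heq] at hw
      exact (Finset.mem_inter.mp hw).2
    have hun : (G.neighborFinset x ∪ G.neighborFinset y).card = 2 * p := by
      have := Finset.card_union_add_card_inter (G.neighborFinset x) (G.neighborFinset y)
      rw [hinter, Finset.card_empty, hNcard, hNcard] at this
      omega
    have : 2 * p ≤ p := by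
      rw [← hun, ← hNcard z]
      exact Finset.card_le_card (Finset.union_subset hsubx hsuby)
    omega
  -- the full adjacency description
  have hadj_iff : ∀ x y : V, G.Adj x y ↔ (cls y = cls x + 1 ∨ cls y = cls x - 1) := by
    intro x y
    constructor
    · exact hbeta x y
    · rintro (h | h)
      · exact hgamma x y h
      · refine G.adj_symm (hgamma y x ?_)
        rw [h]; exact (sub_add_cancel _ _).symm
  -- class sizes
  set W : Fin 5 → Finset V := fun i => Finset.univ.filter (fun x => cls x = i) with hW
  have hNeq : ∀ i : Fin 5, G.neighborFinset (c i) = W (i + 1) ∪ W (i - 1) := by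
    intro i
    ext z
    simp only [mem_neighborFinset, hW, Finset.mem_union, Finset.mem_filter, Finset.mem_univ,
      true_and]
    rw [hadj_iff, hclsc]
  have hWdisj : ∀ i j : Fin 5, i ≠ j → Disjoint (W i) (W j) := by
    intro i j hij
    rw [Finset.disjoint_left]
    intro a ha hb
    simp only [hW, Finset.mem_filter, Finset.mem_univ, true_and] at ha hb
    exact hij (by rw [← ha, hb])
  have hwsum : ∀ i : Fin 5, (W (i + 1)).card + (W (i - 1)).card = p := by
    intro i
    have hd := hWdisj (i + 1) (i - 1) (by revert i; decide)
    rw [← Finset.card_union_of_disjoint hd, ← hNeq i, hNcard]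
  have hs0 := hwsum 0
  have hs1 := hwsum 1
  have hs2 := hwsum 2
  have hs3 := hwsum 3
  have hs4 := hwsum 4
  rw [show (0:Fin 5) + 1 = 1 by decide, show (0:Fin 5) - 1 = 4 by decide] at hs0
  rw [show (1:Fin 5) + 1 = 2 by decide, show (1:Fin 5) - 1 = 0 by decide] at hs1
  rw [show (2:Fin 5) + 1 = 3 by decide, show (2:Fin 5) - 1 = 1 by decide] at hs2
  rw [show (3:Fin 5) + 1 = 4 by decide, show (3:Fin 5) - 1 = 2 by decide] at hs3
  rw [show (4:Fin 5) + 1 = 0 by decide, show (4:Fin 5) - 1 = 3 by decide] at hs4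
  have htot : n = (W 0).card + ((W 1).card + ((W 2).card + ((W 3).card + (W 4).card))) := by
    rw [← horder, ← Finset.card_univ,
      Finset.card_eq_sum_card_fiberwise (f := cls) (t := Finset.univ)
        (fun x _ => Finset.mem_univ _), Fin.sum_univ_five]
    simp only [hW]
    ring
  have e0 : (W 0).card = p / 2 := by omega
  have e1 : (W 1).card = p / 2 := by omega
  have e2 : (W 2).card = p / 2 := by omega
  have e3 : (W 3).card = p / 2 := by omega
  have e4 : (W 4).card = p / 2 := by omega
  have hwall : ∀ i : Fin 5, (W i).card = p / 2 := by
    intro i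
    fin_cases i
    exacts [e0, e1, e2, e3, e4]
  refine ⟨⟨(W 0).card, by omega⟩, by omega, ?_⟩
  have hcardsub : ∀ i : Fin 5, Fintype.card {x : V // cls x = i} = p / 2 := by
    intro i
    rw [Fintype.card_subtype]
    exact hwall i
  let eq5 : ∀ i : Fin 5, {x : V // cls x = i} ≃ Fin (p / 2) := fun i =>
    Fintype.equivFinOfCardEq (hcardsub i)
  let ψ : V ≃ (Fin 5 × Fin (p / 2)) :=
    (Equiv.sigmaFiberEquiv cls).symm.trans ((Equiv.sigmaCongrRight eq5).trans
      (Equiv.sigmaEquivProd (Fin 5) (Fin (p / 2))))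
  refine ⟨{ toEquiv := ψ, map_rel_iff' := ?_ }⟩
  intro a b
  show (cycleGraph 5).Adj (cls a) (cls b) ↔ G.Adj a b
  rw [cycleGraph_adj, hadj_iff]
  generalize cls a = i
  generalize cls b = j
  revert i j
  decide

end Helpers

/-- a triangle-free `[p+2, p]`-graph of order `n ≥ 2p+3` with minimum degree at
least `p ≥ 2` satisfies: `p` is even, `p ≥ 6`, and `G ≅ C₅^{(p/2)}`. -/
theorem triangle_free_st_graph_classification {V : Type*} [Fintype V] [DecidableEq V]
    (G : SimpleGraph V) [DecidableRel G.Adj] (p n : ℕ) (hp : 2 ≤ p)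
    (horder : Fintype.card V = n) (hn : 2 * p + 3 ≤ n)
    (hst : IsSTGraph G (p + 2) p) (htf : G.CliqueFree 3)
    (hdeg : p ≤ G.minDegree) :
    Even p ∧ 6 ≤ p ∧ Nonempty (G ≃g blowup (cycleGraph 5) (p / 2)) :=
  triangle_free_st_graph_classification' G p n hp horder hn hst htf hdeg
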